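/- Let f be a monic complex polynomial of degree n ≥ 2 all of whose roots lie on a straight line through the origin, i.e. there exists θ ∈ ℝ such that every root of f is of the form t·e^{iθ} with t ∈ ℝ. Let w_1, ..., w_n be the roots of f counted with multiplicity, ξ_1, ..., ξ_{n-1} the roots of f' counted with multiplicity, and z_{n-1} the unique root of f^{(n-1)}. Then Σ_{j=1}^{n-1} |ξ_j|^2 = ((n-2)/n) · Σ_{j=1}^{n} |w_j|^2 + |z_{n-1}|^2. -/

import Mathlib

open Polynomial Multiset

lemma esymm_one' (s : Multiset ℝ) : s.esymm 1 = s.sum := by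
  rw [Multiset.esymm, powersetCard_one, Multiset.map_map]
  simp [Function.comp_def]

lemma esymm_two_cons (a : ℝ) (s : Multiset ℝ) :
    (a ::ₘ s).esymm 2 = s.esymm 2 + a * s.sum := by
  rw [Multiset.esymm, show (2:ℕ) = 1 + 1 from rfl, powersetCard_cons,
    Multiset.map_add, Multiset.sum_add, Multiset.map_map]
  congr 1
  rw [show ((powersetCard 1 s).map (Multiset.prod ∘ Multiset.cons a)).sum
      = ((powersetCard 1 s).map (fun t => a * t.prod)).sum by
    congr 1; exact Multiset.map_congr rfl fun t _ => by simp [Multiset.prod_cons]]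
  rw [Multiset.sum_map_mul_left]
  congr 1
  rw [← esymm_one' s, Multiset.esymm]

lemma sum_sq_eq (s : Multiset ℝ) :
    (s.map (fun x => x ^ 2)).sum = s.sum ^ 2 - 2 * s.esymm 2 := by
  induction s using Multiset.induction with
  | empty => simp [Multiset.esymm, Multiset.powersetCard_eq_empty 2 (s := (0 : Multiset ℝ)) (by simp)]
  | cons a s ih =>
      rw [Multiset.map_cons, Multiset.sum_cons, Multiset.sum_cons, esymm_two_cons, ih]
      ring

theorem stmt17 (n : ℕ) (hn : 2 ≤ n) (f : Polynomial ℂ) (hf : f.Monic)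
    (hdeg : f.natDegree = n)
    (hline : ∃ θ : ℝ, ∀ z : ℂ, f.eval z = 0 →
      ∃ t : ℝ, z = (t : ℂ) * Complex.exp ((θ : ℂ) * Complex.I))
    (z : ℂ) (hz : (Polynomial.derivative^[n - 1] f).eval z = 0) :
    (((Polynomial.derivative f).roots).map (fun x => ‖x‖ ^ 2)).sum =
      (((n : ℝ) - 2) / (n : ℝ)) * ((f.roots).map (fun x => ‖x‖ ^ 2)).sum +
        ‖z‖ ^ 2 := by
  obtain ⟨θ, hθ⟩ := hline
  set a : ℂ := Complex.exp ((θ:ℂ) * Complex.I) with ha_def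
  have ha : a ≠ 0 := Complex.exp_ne_zero _
  have habs : ‖a‖ = 1 := by
    rw [ha_def, Complex.norm_exp]
    simp [Complex.mul_I_re]
  have hn0 : (n:ℝ) ≠ 0 := Nat.cast_ne_zero.2 (by omega)
  have hnC : (n:ℂ) ≠ 0 := Nat.cast_ne_zero.2 (by omega)
  have hsplits : f.Splits := IsAlgClosed.splits f
  have hcard : Multiset.card f.roots = n := by
    rw [← hdeg]; exact (Polynomial.splits_iff_card_roots.mp hsplits)
  set T : Multiset ℝ := f.roots.map (fun w => (w * a⁻¹).re) with hT
  have hTcard : Multiset.card T = n := by rw [hT, Multiset.card_map, hcard]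
  have hroots : f.roots = Multiset.map (fun t : ℝ => (t:ℂ) * a) T := by
    rw [hT, Multiset.map_map]
    symm
    have : ∀ w ∈ f.roots, ((fun t : ℝ => (t:ℂ) * a) ∘ fun w : ℂ => (w * a⁻¹).re) w = id w := by
      intro w hw
      obtain ⟨t, ht⟩ := hθ w (isRoot_of_mem_roots hw)
      have h1 : w * a⁻¹ = (t:ℂ) := by rw [ht]; field_simp
      simp only [Function.comp_apply, h1, Complex.ofReal_re, id]
      rw [← ht]
    rw [Multiset.map_congr rfl this, Multiset.map_id]
  set q : Polynomial ℝ := (T.map (fun t => X - C t)).prod with hq_def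
  have hqmonic : q.Monic :=
    monic_multiset_prod_of_monic T _ fun t _ => monic_X_sub_C t
  have hqdeg : q.natDegree = n := by
    rw [hq_def, natDegree_multiset_prod_X_sub_C_eq_card, hTcard]
  have hqroots : q.roots = T := roots_multiset_prod_X_sub_C T
  have hfprod : f = (T.map (fun t : ℝ => X - C ((t:ℂ) * a))).prod := by
    rw [hsplits.eq_prod_roots_of_monic hf, hroots, Multiset.map_map]
    rfl
  have hcomp : f = C (a ^ n) * (q.map (algebraMap ℝ ℂ)).comp (C a⁻¹ * X) := by
    have h1 : C (a ^ n) = (Multiset.map (fun _ : ℝ => C a) T).prod := by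
      rw [Multiset.map_const', Multiset.prod_replicate, hTcard, C_pow]
    rw [hq_def, Polynomial.map_multiset_prod, Multiset.map_map, multiset_prod_comp,
      Multiset.map_map, h1, ← Multiset.prod_map_mul, hfprod]
    congr 1
    apply Multiset.map_congr rfl
    intro t _
    simp only [Function.comp_apply, Polynomial.map_sub, Polynomial.map_X, Polynomial.map_C,
      sub_comp, X_comp, C_comp]
    rw [mul_sub, ← mul_assoc, ← C_mul, mul_inv_cancel₀ ha, C_1, one_mul, ← C_mul]
    simp [Complex.coe_algebraMap, mul_comm]
  set q1 := derivative q with hq1_def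
  have hcq : q.coeff n = 1 := by rw [← hqdeg]; exact hqmonic.coeff_natDegree
  have hcast : ((n - 1 : ℕ) : ℝ) + 1 = (n : ℝ) := by
    push_cast [Nat.cast_sub (show 1 ≤ n by omega)]; ring
  have hq1lc : q1.coeff (n - 1) = (n : ℝ) := by
    rw [hq1_def, coeff_derivative, show n - 1 + 1 = n by omega, hcq, one_mul, hcast]
  have hq1deg : q1.natDegree = n - 1 :=
    le_antisymm ((natDegree_derivative_le q).trans_eq (by rw [hqdeg]))
      (le_natDegree_of_ne_zero (by rw [hq1lc]; exact hn0))
  have hq1card : Multiset.card q1.roots = n - 1 := by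
    refine le_antisymm (le_trans (card_roots' q1) (by rw [hq1deg])) ?_
    have h := Polynomial.card_roots_le_derivative q
    rw [hqroots, hTcard, ← hq1_def] at h
    omega
  set R := q1.roots with hR_def
  have hRcard : Multiset.card R = n - 1 := hq1card
  have hq1lc' : q1.leadingCoeff = (n : ℝ) := by
    rw [Polynomial.leadingCoeff, hq1deg, hq1lc]
  have hq1eq : C ((n : ℝ)) * (R.map (fun r => X - C r)).prod = q1 := by
    rw [← hq1lc']
    exact C_leadingCoeff_mul_prod_multiset_X_sub_C (by rw [hq1card, hq1deg])
  have h2 : q1.map (algebraMap ℝ ℂ) = C ((n : ℂ)) * (R.map (fun r : ℝ => X - C ((r : ℂ)))).prod := by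
    rw [← hq1eq, Polynomial.map_mul, Polynomial.map_C, Polynomial.map_multiset_prod,
      Multiset.map_map]
    simp only [map_natCast]
    congr 1
    congr 1
    apply Multiset.map_congr rfl
    intro r _
    simp [Complex.coe_algebraMap]
  have hderf : derivative f = C ((n : ℂ)) * (R.map (fun r : ℝ => X - C ((r : ℂ) * a))).prod := by
    have h3 : derivative f
        = C (a ^ n) * (C a⁻¹ * (q1.map (algebraMap ℝ ℂ)).comp (C a⁻¹ * X)) := by
      rw [hcomp, derivative_C_mul, derivative_comp, derivative_map, ← hq1_def,
        derivative_C_mul, derivative_X, mul_one]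
    rw [h3, h2, mul_comp, C_comp, multiset_prod_comp, Multiset.map_map]
    have h4 : C (a ^ (n - 1)) = (Multiset.map (fun _ : ℝ => C a) R).prod := by
      rw [Multiset.map_const', Multiset.prod_replicate, hRcard, C_pow]
    have h5 : (R.map (fun r : ℝ => X - C ((r : ℂ) * a))).prod
        = C (a ^ (n - 1)) * (R.map ((fun p : Polynomial ℂ => p.comp (C a⁻¹ * X)) ∘
            fun r : ℝ => X - C ((r : ℂ)))).prod := by
      rw [h4, ← Multiset.prod_map_mul]
      congr 1
      apply Multiset.map_congr rfl
      intro r _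
      simp only [Function.comp_apply, sub_comp, X_comp, C_comp]
      rw [mul_sub, ← mul_assoc, ← C_mul, mul_inv_cancel₀ ha, C_1, one_mul, ← C_mul, mul_comm a]
    rw [h5]
    rw [show a ^ n = a ^ (n - 1) * a by rw [← pow_succ, show n - 1 + 1 = n by omega]]
    simp only [C_mul]
    have hCa : C a * C a⁻¹ = (1 : Polynomial ℂ) := by
      rw [← C_mul, mul_inv_cancel₀ ha, C_1]
    linear_combination (C (a ^ (n - 1)) * C ((n:ℂ)) *
      (Multiset.map ((fun p : Polynomial ℂ => p.comp (C a⁻¹ * X)) ∘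
        fun r : ℝ => X - C ((r:ℂ))) R).prod) * hCa
  have hrootsf : (derivative f).roots = R.map (fun r : ℝ => (r : ℂ) * a) := by
    rw [hderf, Polynomial.roots_C_mul _ hnC,
      show (R.map (fun r : ℝ => X - C ((r : ℂ) * a))) =
        ((R.map (fun r : ℝ => (r : ℂ) * a)).map (fun w => X - C w)) by
          rw [Multiset.map_map]; rfl,
      roots_multiset_prod_X_sub_C]
  have hsum1 : ((derivative f).roots.map (fun x => ‖x‖ ^ 2)).sum
      = (R.map (fun r => r ^ 2)).sum := by
    rw [hrootsf, Multiset.map_map]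
    congr 1
    apply Multiset.map_congr rfl
    intro r _
    simp only [Function.comp_apply, norm_mul, habs, Complex.norm_real, Real.norm_eq_abs, mul_one]
    exact sq_abs r
  have hsum2 : (f.roots.map (fun x => ‖x‖ ^ 2)).sum
      = (T.map (fun t => t ^ 2)).sum := by
    rw [hroots, Multiset.map_map]
    congr 1
    apply Multiset.map_congr rfl
    intro t _
    simp only [Function.comp_apply, norm_mul, habs, Complex.norm_real, Real.norm_eq_abs, mul_one]
    exact sq_abs t
  have hfc : f.coeff (n - 1) = -((T.sum : ℂ) * a) := by
    have h6 : f.nextCoeff = -f.roots.sum := hsplits.nextCoeff_eq_neg_sum_roots_of_monic hf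
    rw [nextCoeff_of_natDegree_pos (by rw [hdeg]; omega), hdeg] at h6
    have hcoesum : ∀ (s : Multiset ℝ),
        (Multiset.map (fun t : ℝ => (t:ℂ)) s).sum = ((s.sum : ℝ) : ℂ) := fun s => by
      induction s using Multiset.induction with
      | empty => simp
      | cons b s ih => simp [ih]
    rw [h6, hroots, Multiset.sum_map_mul_right, hcoesum]
  have hgdeg : ((derivative)^[n-1] f).natDegree ≤ 1 := by
    have h7 := natDegree_iterate_derivative f (n-1)
    rw [hdeg] at h7
    omega
  have hgc1 : ((derivative)^[n-1] f).coeff 1 = (((n-1).factorial : ℂ) * n) := by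
    rw [coeff_iterate_derivative, show 1 + (n-1) = n by omega,
      show f.coeff n = 1 from by rw [← hdeg]; exact hf.coeff_natDegree,
      Nat.descFactorial_eq_factorial_mul_choose,
      show n.choose (n-1) = n by
        rw [Nat.choose_symm (show 1 ≤ n by omega), Nat.choose_one_right]]
    simp [nsmul_eq_mul]
  have hgc0 : ((derivative)^[n-1] f).coeff 0 = ((n-1).factorial : ℂ) * f.coeff (n-1) := by
    rw [coeff_iterate_derivative, zero_add, Nat.descFactorial_self]
    simp [nsmul_eq_mul]
  have hfact : (((n-1).factorial : ℕ) : ℂ) ≠ 0 := Nat.cast_ne_zero.2 (Nat.factorial_ne_zero _)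
  have hzval : z = (T.sum : ℂ) * a / n := by
    have he := hz
    rw [Polynomial.eq_X_add_C_of_degree_le_one ((natDegree_le_iff_degree_le).mp hgdeg)] at he
    simp only [eval_add, eval_mul, eval_C, eval_X] at he
    rw [hgc1, hgc0, hfc] at he
    have h8 : (((n-1).factorial : ℕ) : ℂ) * ((n:ℂ) * z - (T.sum : ℂ) * a) = 0 := by
      linear_combination he
    rcases mul_eq_zero.mp h8 with h9 | h9
    · exact absurd h9 hfact
    · field_simp
      linear_combination h9
  have habsz : ‖z‖ ^ 2 = (T.sum / n) ^ 2 := by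
    rw [hzval, norm_div, norm_mul, Complex.norm_real, Real.norm_eq_abs, habs, mul_one, Complex.norm_natCast,
      div_pow, div_pow, sq_abs]
  have hqrc : Multiset.card q.roots = q.natDegree := by rw [hqroots, hTcard, hqdeg]
  have hE2 : q.coeff (n-2) = T.esymm 2 := by
    rw [Polynomial.coeff_eq_esymm_roots_of_card hqrc (by rw [hqdeg]; omega),
      hqmonic.leadingCoeff, hqroots, hqdeg, show n - (n-2) = 2 by omega]
    norm_num
  have hS1 : q.coeff (n-1) = -T.sum := by
    rw [Polynomial.coeff_eq_esymm_roots_of_card hqrc (by rw [hqdeg]; omega),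
      hqmonic.leadingCoeff, hqroots, hqdeg, show n - (n-1) = 1 by omega, esymm_one']
    ring
  have hq1rc : Multiset.card q1.roots = q1.natDegree := by rw [hq1card, hq1deg]
  have hR1 : q1.coeff (n-2) = -((n:ℝ) * R.sum) := by
    rw [Polynomial.coeff_eq_esymm_roots_of_card hq1rc (by rw [hq1deg]; omega),
      hq1lc', hq1deg, show (n-1) - (n-2) = 1 by omega, ← hR_def, esymm_one']
    ring
  have hrel1 : q1.coeff (n-2) = q.coeff (n-1) * ((n:ℝ) - 1) := by
    rw [hq1_def, coeff_derivative, show n-2+1 = n-1 by omega]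
    congr 1
    rw [Nat.cast_sub (show 2 ≤ n by omega)]
    push_cast
    ring
  have hRsum : (n:ℝ) * R.sum = ((n:ℝ) - 1) * T.sum := by
    linear_combination hR1 - hrel1 - ((n:ℝ) - 1) * hS1
  have hE2' : (n:ℝ) * R.esymm 2 = ((n:ℝ) - 2) * T.esymm 2 := by
    rcases eq_or_lt_of_le hn with h2 | h3
    · have h10 : R.esymm 2 = 0 := by
        rw [Multiset.esymm, Multiset.powersetCard_eq_empty _ (by rw [hRcard]; omega)]
        simp
      rw [h10, ← h2]
      norm_num
    · have hv2 := Polynomial.coeff_eq_esymm_roots_of_card hq1rc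
        (show n - 3 ≤ q1.natDegree by rw [hq1deg]; omega)
      rw [hq1lc', hq1deg, show (n-1) - (n-3) = 2 by omega, ← hR_def] at hv2
      have hrel2 : q1.coeff (n-3) = q.coeff (n-2) * ((n:ℝ) - 2) := by
        rw [hq1_def, coeff_derivative, show n-3+1 = n-2 by omega]
        congr 1
        rw [Nat.cast_sub (show 3 ≤ n by omega)]
        push_cast
        ring
      rw [hv2, hE2] at hrel2
      linear_combination hrel2
  have hRv : R.sum = ((n:ℝ) - 1) * T.sum / n := by
    rw [eq_div_iff hn0]
    linear_combination hRsum
  have hE2v : R.esymm 2 = ((n:ℝ) - 2) * T.esymm 2 / n := by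
    rw [eq_div_iff hn0]
    linear_combination hE2'
  rw [hsum1, hsum2, habsz, sum_sq_eq, sum_sq_eq, hRv, hE2v]
  field_simp
  ring
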